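/- The map sending a 3-stack sortable permutation p of length n to its 3-stack word (the word in {A,B,C,D}^{4n} recording the moves of the greedy 3-stack sorting algorithm on p) is injective. -/
import Mathlib


set_option linter.unusedVariables false

inductive Move | A | B | C | D
deriving DecidableEq, Repr

structure Config where
  input : List ℕ
  s1 : List ℕ
  s2 : List ℕ
  s3 : List ℕ
  out : List ℕ

def canA (c : Config) : Bool :=
  match c.input, c.s1 with
  | x :: _, [] => true
  | x :: _, t :: _ => decide (x < t)
  | [], _ => false

def canB (c : Config) : Bool :=
  match c.s1, c.s2 with
  | x :: _, [] => true
  | x :: _, t :: _ => decide (x < t)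
  | [], _ => false

def canC (c : Config) : Bool :=
  match c.s2, c.s3 with
  | x :: _, [] => true
  | x :: _, t :: _ => decide (x < t)
  | [], _ => false

def canD (c : Config) : Bool := !c.s3.isEmpty

def doA (c : Config) : Config :=
  { c with input := c.input.tail, s1 := c.input.headD 0 :: c.s1 }
def doB (c : Config) : Config :=
  { c with s1 := c.s1.tail, s2 := c.s1.headD 0 :: c.s2 }
def doC (c : Config) : Config :=
  { c with s2 := c.s2.tail, s3 := c.s2.headD 0 :: c.s3 }
def doD (c : Config) : Config :=
  { c with s3 := c.s3.tail, out := c.out ++ [c.s3.headD 0] }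

/-- One step of the greedy (priority `A > B > C > D`) 3-stack sorting algorithm:
`A` = input→S₁, `B` = S₁→S₂, `C` = S₂→S₃, `D` = S₃→output. -/
def step (c : Config) : Option (Move × Config) :=
  if canA c then some (.A, doA c)
  else if canB c then some (.B, doB c)
  else if canC c then some (.C, doC c)
  else if canD c then some (.D, doD c)
  else none

def runWord : ℕ → Config → List Move
  | 0, _ => []
  | fuel + 1, c =>
    match step c with
    | none => []
    | some (m, c') => m :: runWord fuel c'

def run : ℕ → Config → Config
  | 0, c => c
  | fuel + 1, c =>
    match step c with
    | none => c
    | some (_, c') => run fuel c'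

def initConfig (p : List ℕ) : Config := ⟨p, [], [], [], []⟩

/-- The 3-stack word of `p`: the sequence of moves of the greedy algorithm on `p`. -/
def stackWord (p : List ℕ) : List Move := runWord (4 * p.length) (initConfig p)

/-- The output of the greedy 3-stack sorting algorithm on `p`. -/
def output3 (p : List ℕ) : List ℕ := (run (4 * p.length) (initConfig p)).out

def total (c : Config) : ℕ :=
  c.input.length + c.s1.length + c.s2.length + c.s3.length + c.out.length

lemma canA_ne {c : Config} (h : canA c = true) : c.input ≠ [] := by
  intro hn; obtain ⟨i, a, b, d, e⟩ := c; simp_all [canA]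

lemma canB_ne {c : Config} (h : canB c = true) : c.s1 ≠ [] := by
  intro hn; obtain ⟨i, a, b, d, e⟩ := c; simp_all [canB]

lemma canC_ne {c : Config} (h : canC c = true) : c.s2 ≠ [] := by
  intro hn; obtain ⟨i, a, b, d, e⟩ := c; simp_all [canC]

lemma canD_ne {c : Config} (h : canD c = true) : c.s3 ≠ [] := by
  intro hn; simp_all [canD]

lemma doA_inj {c1 c2 : Config} (h1 : canA c1 = true) (h2 : canA c2 = true)
    (h : doA c1 = doA c2) : c1 = c2 := by
  have n1 := canA_ne h1; have n2 := canA_ne h2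
  obtain ⟨i1, a1, b1, d1, e1⟩ := c1
  obtain ⟨i2, a2, b2, d2, e2⟩ := c2
  cases i1 <;> cases i2 <;> simp_all [doA]

lemma doB_inj {c1 c2 : Config} (h1 : canB c1 = true) (h2 : canB c2 = true)
    (h : doB c1 = doB c2) : c1 = c2 := by
  have n1 := canB_ne h1; have n2 := canB_ne h2
  obtain ⟨i1, a1, b1, d1, e1⟩ := c1
  obtain ⟨i2, a2, b2, d2, e2⟩ := c2
  cases a1 <;> cases a2 <;> simp_all [doB]

lemma doC_inj {c1 c2 : Config} (h1 : canC c1 = true) (h2 : canC c2 = true)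
    (h : doC c1 = doC c2) : c1 = c2 := by
  have n1 := canC_ne h1; have n2 := canC_ne h2
  obtain ⟨i1, a1, b1, d1, e1⟩ := c1
  obtain ⟨i2, a2, b2, d2, e2⟩ := c2
  cases b1 <;> cases b2 <;> simp_all [doC]

lemma doD_inj {c1 c2 : Config} (h1 : canD c1 = true) (h2 : canD c2 = true)
    (h : doD c1 = doD c2) : c1 = c2 := by
  have n1 := canD_ne h1; have n2 := canD_ne h2
  obtain ⟨i1, a1, b1, d1, e1⟩ := c1
  obtain ⟨i2, a2, b2, d2, e2⟩ := c2
  obtain ⟨x, t1, rfl⟩ := List.exists_cons_of_ne_nil n1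
  obtain ⟨y, t2, rfl⟩ := List.exists_cons_of_ne_nil n2
  simp only [doD, Config.mk.injEq, List.tail_cons, List.headD_cons] at h ⊢
  have h5 := List.append_inj' h.2.2.2.2 rfl
  simp_all

lemma step_inj {c1 c2 : Config} {m : Move} {c1' c2' : Config}
    (h1 : step c1 = some (m, c1')) (h2 : step c2 = some (m, c2'))
    (he : c1' = c2') : c1 = c2 := by
  unfold step at h1 h2
  split_ifs at h1 with a1 b1 d1 e1 <;> split_ifs at h2 with a2 b2 d2 e2 <;>
    simp only [Option.some.injEq, Prod.mk.injEq] at h1 h2 <;>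
    obtain ⟨hm1, hc1⟩ := h1 <;> obtain ⟨hm2, hc2⟩ := h2 <;> subst hm1 <;>
    first
    | exact Move.noConfusion hm2
    | exact doA_inj a1 a2 (hc1.trans (he.trans hc2.symm))
    | exact doB_inj b1 b2 (hc1.trans (he.trans hc2.symm))
    | exact doC_inj d1 d2 (hc1.trans (he.trans hc2.symm))
    | exact doD_inj e1 e2 (hc1.trans (he.trans hc2.symm))

lemma step_total {c : Config} {m : Move} {c' : Config}
    (h : step c = some (m, c')) : total c' = total c := by
  unfold step at h
  split_ifs at h with a b d e
  · cases h
    obtain ⟨x, t, hx⟩ := List.exists_cons_of_ne_nil (canA_ne a)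
    simp [total, doA, hx]; omega
  · cases h
    obtain ⟨x, t, hx⟩ := List.exists_cons_of_ne_nil (canB_ne b)
    simp [total, doB, hx]; omega
  · cases h
    obtain ⟨x, t, hx⟩ := List.exists_cons_of_ne_nil (canC_ne d)
    simp [total, doC, hx]; omega
  · cases h
    obtain ⟨x, t, hx⟩ := List.exists_cons_of_ne_nil (canD_ne e)
    simp [total, doD, hx]; omega

lemma run_total : ∀ (fuel : ℕ) (c : Config), total (run fuel c) = total c := by
  intro fuel
  induction fuel with
  | zero => intro c; rfl
  | succ f ih =>
    intro c
    unfold run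
    cases h : step c with
    | none => rfl
    | some mc =>
      obtain ⟨m, c'⟩ := mc
      rw [ih c', step_total h]

lemma run_inj : ∀ (fuel : ℕ) (c1 c2 : Config),
    runWord fuel c1 = runWord fuel c2 → run fuel c1 = run fuel c2 → c1 = c2 := by
  intro fuel
  induction fuel with
  | zero => intro c1 c2 _ h; simpa [run] using h
  | succ f ih =>
    intro c1 c2 hw hr
    unfold runWord at hw
    unfold run at hr
    cases h1 : step c1 with
    | none =>
      cases h2 : step c2 with
      | none => rw [h1, h2] at hr; exact hr
      | some mc2 => rw [h1, h2] at hw; simp at hw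
    | some mc1 =>
      cases h2 : step c2 with
      | none => rw [h1, h2] at hw; simp at hw
      | some mc2 =>
        obtain ⟨m1, c1'⟩ := mc1
        obtain ⟨m2, c2'⟩ := mc2
        rw [h1, h2] at hw hr
        simp only [List.cons.injEq] at hw
        have hc := ih c1' c2' hw.2 hr
        exact step_inj h1 (hw.1 ▸ h2) hc

/-- The map sending a 3-stack sortable permutation `p` of length `n` to its
3-stack word is injective. -/
theorem stmt_19 (n : ℕ) (p q : List ℕ)
    (hp : p.Perm (List.range' 1 n)) (hq : q.Perm (List.range' 1 n))
    (hp3 : output3 p = List.range' 1 n) (hq3 : output3 q = List.range' 1 n)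
    (hw : stackWord p = stackWord q) : p = q := by
  have hlp : p.length = n := by simpa using hp.length_eq
  have hlq : q.length = n := by simpa using hq.length_eq
  have key : ∀ r : List ℕ, r.length = n → output3 r = List.range' 1 n →
      run (4 * n) (initConfig r) = ⟨[], [], [], [], List.range' 1 n⟩ := by
    intro r hr ho
    have ht : total (run (4 * r.length) (initConfig r)) = r.length := by
      rw [run_total]; simp [total, initConfig]
    unfold output3 at ho
    rw [hr] at ht ho
    set c := run (4 * n) (initConfig r) with hc
    have hol : c.out.length = n := by rw [ho]; simp
    unfold total at ht
    obtain ⟨i, a, b, d, e⟩ := c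
    simp_all
  have hrun : run (4 * n) (initConfig p) = run (4 * n) (initConfig q) := by
    rw [key p hlp hp3, key q hlq hq3]
  have hwd : runWord (4 * n) (initConfig p) = runWord (4 * n) (initConfig q) := by
    unfold stackWord at hw; rwa [hlp, hlq] at hw
  have := run_inj (4 * n) (initConfig p) (initConfig q) hwd hrun
  simpa [initConfig, Config.mk.injEq] using this
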